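/- Let r ≥ 4 be an integer and let c : Fin (2r+5) × Fin (11r+1) → Fin r be a coloring of the ((2r+5) × (11r+1))-grid containing no monochromatic grid rectangle and no rainbow grid rectangle. Then in row 0 there do not exist three pairwise distinct colors each appearing at least 2 times; that is, there do not exist pairwise distinct colors t, t', t'' with |{j : c(0,j) = t}| ≥ 2, |{j : c(0,j) = t'}| ≥ 2 and |{j : c(0,j) = t''}| ≥ 2. (Equivalently, the third-largest color class of row 0 has size at most 1.) -/

import Mathlib

/-- Four subsets of a 12-element set, each of size ≥ 5, pairwise intersecting
in ≤ 1 element: impossible. -/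
lemma aux_four_sets {α : Type*} [DecidableEq α] (P X1 X2 X3 X4 : Finset α)
    (s1 : X1 ⊆ P) (s2 : X2 ⊆ P) (s3 : X3 ⊆ P) (s4 : X4 ⊆ P)
    (h1 : 5 ≤ X1.card) (h2 : 5 ≤ X2.card) (h3 : 5 ≤ X3.card) (h4 : 5 ≤ X4.card)
    (c12 : (X1 ∩ X2).card ≤ 1) (c13 : (X1 ∩ X3).card ≤ 1) (c14 : (X1 ∩ X4).card ≤ 1)
    (c23 : (X2 ∩ X3).card ≤ 1) (c24 : (X2 ∩ X4).card ≤ 1) (c34 : (X3 ∩ X4).card ≤ 1)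
    (hP : P.card = 12) : False := by
  have u2 : 9 ≤ (X1 ∪ X2).card := by
    have := Finset.card_union_add_card_inter X1 X2; omega
  have i3 : ((X1 ∪ X2) ∩ X3).card ≤ 2 := by
    rw [Finset.union_inter_distrib_right]
    have := Finset.card_union_le (X1 ∩ X3) (X2 ∩ X3); omega
  have u3 : 12 ≤ ((X1 ∪ X2) ∪ X3).card := by
    have := Finset.card_union_add_card_inter (X1 ∪ X2) X3; omega
  have i4 : (((X1 ∪ X2) ∪ X3) ∩ X4).card ≤ 3 := by
    rw [Finset.union_inter_distrib_right, Finset.union_inter_distrib_right]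
    have a := Finset.card_union_le (X1 ∩ X4 ∪ X2 ∩ X4) (X3 ∩ X4)
    have b := Finset.card_union_le (X1 ∩ X4) (X2 ∩ X4); omega
  have u4 : 14 ≤ (((X1 ∪ X2) ∪ X3) ∪ X4).card := by
    have := Finset.card_union_add_card_inter ((X1 ∪ X2) ∪ X3) X4; omega
  have hsub : ((X1 ∪ X2) ∪ X3) ∪ X4 ⊆ P := by
    intro x hx
    simp only [Finset.mem_union] at hx
    rcases hx with ((h|h)|h)|h
    exacts [s1 h, s2 h, s3 h, s4 h]
  have := Finset.card_le_card hsub; omega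

lemma aux_other_elem {β : Type*} [DecidableEq β] (S : Finset β) (hS : S.card = 2)
    (a : β) (ha : a ∈ S) : ∃ d, d ≠ a ∧ S = {a, d} := by
  obtain ⟨u, v, huv, rfl⟩ := Finset.card_eq_two.mp hS
  simp only [Finset.mem_insert, Finset.mem_singleton] at ha
  rcases ha with rfl | rfl
  · exact ⟨v, huv.symm, rfl⟩
  · exact ⟨u, huv, by rw [Finset.pair_comm]⟩

/-- The set chase: five 2-element sets, S1 = {a,b}, a in Sx,Sy, b in Sz,Sw,
pairwise intersecting, no element in 4 of the sets: impossible. -/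
lemma aux_chase {β : Type*} [DecidableEq β] (a b : β) (S1 Sx Sy Sz Sw : Finset β)
    (hab : a ≠ b) (ha1 : a ∈ S1) (hb1 : b ∈ S1)
    (hax : a ∈ Sx) (hay : a ∈ Sy) (hbz : b ∈ Sz) (hbw : b ∈ Sw)
    (cx : Sx.card = 2) (cy : Sy.card = 2) (cz : Sz.card = 2) (cw : Sw.card = 2)
    (ixz : (Sx ∩ Sz).Nonempty) (ixw : (Sx ∩ Sw).Nonempty)
    (iyz : (Sy ∩ Sz).Nonempty) (iyw : (Sy ∩ Sw).Nonempty)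
    (n1 : ∀ x, ¬(x ∈ S1 ∧ x ∈ Sx ∧ x ∈ Sy ∧ x ∈ Sz))
    (n2 : ∀ x, ¬(x ∈ S1 ∧ x ∈ Sx ∧ x ∈ Sy ∧ x ∈ Sw))
    (n3 : ∀ x, ¬(x ∈ S1 ∧ x ∈ Sz ∧ x ∈ Sw ∧ x ∈ Sx))
    (n4 : ∀ x, ¬(x ∈ S1 ∧ x ∈ Sz ∧ x ∈ Sw ∧ x ∈ Sy))
    (n5 : ∀ x, ¬(x ∈ Sx ∧ x ∈ Sy ∧ x ∈ Sz ∧ x ∈ Sw)) : False := by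
  have haz : a ∉ Sz := fun h => n1 a ⟨ha1, hax, hay, h⟩
  have haw : a ∉ Sw := fun h => n2 a ⟨ha1, hax, hay, h⟩
  have hbx : b ∉ Sx := fun h => n3 b ⟨hb1, hbz, hbw, h⟩
  have hby : b ∉ Sy := fun h => n4 b ⟨hb1, hbz, hbw, h⟩
  obtain ⟨dx, hdxa, hSx⟩ := aux_other_elem Sx cx a hax
  obtain ⟨dy, hdya, hSy⟩ := aux_other_elem Sy cy a hay
  obtain ⟨dz, hdzb, hSz⟩ := aux_other_elem Sz cz b hbz
  obtain ⟨dw, hdwb, hSw⟩ := aux_other_elem Sw cw b hbw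
  -- from Sx ∩ Sz nonempty : dx = dz
  have exz : dx = dz := by
    obtain ⟨e, he⟩ := ixz
    rw [Finset.mem_inter, hSx, hSz] at he
    simp only [Finset.mem_insert, Finset.mem_singleton] at he
    obtain ⟨h1, h2⟩ := he
    rcases h1 with rfl | rfl
    · rcases h2 with rfl | rfl
      · exact absurd rfl hab
      · exact absurd (by rw [hSz]; simp) haz
    · rcases h2 with rfl | rfl
      · exact absurd (by rw [hSx]; simp) hbx
      · rfl
  have eyz : dy = dz := by
    obtain ⟨e, he⟩ := iyz
    rw [Finset.mem_inter, hSy, hSz] at he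
    simp only [Finset.mem_insert, Finset.mem_singleton] at he
    obtain ⟨h1, h2⟩ := he
    rcases h1 with rfl | rfl
    · rcases h2 with rfl | rfl
      · exact absurd rfl hab
      · exact absurd (by rw [hSz]; simp) haz
    · rcases h2 with rfl | rfl
      · exact absurd (by rw [hSy]; simp) hby
      · rfl
  have exw : dx = dw := by
    obtain ⟨e, he⟩ := ixw
    rw [Finset.mem_inter, hSx, hSw] at he
    simp only [Finset.mem_insert, Finset.mem_singleton] at he
    obtain ⟨h1, h2⟩ := he
    rcases h1 with rfl | rfl
    · rcases h2 with rfl | rfl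
      · exact absurd rfl hab
      · exact absurd (by rw [hSw]; simp) haw
    · rcases h2 with rfl | rfl
      · exact absurd (by rw [hSx]; simp) hbx
      · rfl
  refine n5 dx ⟨by rw [hSx]; simp, by rw [hSy, eyz, ← exz]; simp, by rw [hSz, ← exz]; simp,
    by rw [hSw, ← exw]; simp⟩

theorem grid_claim5
    (r : ℕ) (hr : 4 ≤ r)
    (c : Fin (2 * r + 5) × Fin (11 * r + 1) → Fin r)
    (hmono : ¬ ∃ (i i' : Fin (2 * r + 5)) (j j' : Fin (11 * r + 1)),
      i ≠ i' ∧ j ≠ j' ∧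
      c (i, j) = c (i', j) ∧ c (i', j) = c (i, j') ∧ c (i, j') = c (i', j'))
    (hrainbow : ¬ ∃ (i i' : Fin (2 * r + 5)) (j j' : Fin (11 * r + 1)),
      i ≠ i' ∧ j ≠ j' ∧
      c (i, j) ≠ c (i', j) ∧ c (i, j) ≠ c (i, j') ∧ c (i, j) ≠ c (i', j') ∧
      c (i', j) ≠ c (i, j') ∧ c (i', j) ≠ c (i', j') ∧ c (i, j') ≠ c (i', j')) :
    ¬ ∃ t t' t'' : Fin r, t ≠ t' ∧ t ≠ t'' ∧ t' ≠ t'' ∧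
      2 ≤ (Finset.univ.filter fun j : Fin (11 * r + 1) => c (0, j) = t).card ∧
      2 ≤ (Finset.univ.filter fun j : Fin (11 * r + 1) => c (0, j) = t').card ∧
      2 ≤ (Finset.univ.filter fun j : Fin (11 * r + 1) => c (0, j) = t'').card := by
  classical
  rintro ⟨t, t', t'', htt', htt'', ht't'', hct, hct', hct''⟩
  -- convenient forms of the hypotheses
  have mono : ∀ (i i' : Fin (2*r+5)) (j j' : Fin (11*r+1)) (x : Fin r),
      i ≠ i' → j ≠ j' → c (i,j) = x → c (i',j) = x → c (i,j') = x → c (i',j') = x → False := by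
    intro i i' j j' x hii hjj e1 e2 e3 e4
    exact hmono ⟨i, i', j, j', hii, hjj, by rw [e1, e2], by rw [e2, e3], by rw [e3, e4]⟩
  have rain : ∀ (i i' : Fin (2*r+5)) (j j' : Fin (11*r+1)),
      i ≠ i' → j ≠ j' → c (i,j) ≠ c (i',j) → c (i,j) ≠ c (i,j') → c (i,j) ≠ c (i',j') →
      c (i',j) ≠ c (i,j') → c (i',j) ≠ c (i',j') → c (i,j') ≠ c (i',j') → False := by
    intro i i' j j' hii hjj e1 e2 e3 e4 e5 e6
    exact hrainbow ⟨i, i', j, j', hii, hjj, e1, e2, e3, e4, e5, e6⟩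
  -- Step 1 : pigeonhole, a color p on 12 columns of row 0
  obtain ⟨p, -, hp⟩ : ∃ y ∈ (Finset.univ : Finset (Fin r)), 11 <
      ((Finset.univ : Finset (Fin (11*r+1))).filter fun j => c (0,j) = y).card := by
    apply Finset.exists_lt_card_fiber_of_mul_lt_card_of_maps_to
      (fun a _ => Finset.mem_univ _)
    simp only [Finset.card_univ, Fintype.card_fin]
    omega
  obtain ⟨P, hPsub, hPcard⟩ := Finset.exists_subset_card_eq (show 12 ≤ _ by omega :
      12 ≤ ((Finset.univ : Finset (Fin (11*r+1))).filter fun j => c (0,j) = p).card)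
  have hPcol : ∀ u ∈ P, c (0,u) = p := fun u hu => (Finset.mem_filter.mp (hPsub hu)).2
  -- Step 2 : two colors q ≠ q', both ≠ p, each on two columns of row 0
  have twocols : ∀ s : Fin r,
      2 ≤ ((Finset.univ : Finset (Fin (11*r+1))).filter fun j => c (0,j) = s).card →
      ∃ w1 w2, w1 ≠ w2 ∧ c (0,w1) = s ∧ c (0,w2) = s := by
    intro s hs
    obtain ⟨w1, h1, w2, h2, h12⟩ := Finset.one_lt_card.mp (lt_of_lt_of_le one_lt_two hs)
    exact ⟨w1, w2, h12, (Finset.mem_filter.mp h1).2, (Finset.mem_filter.mp h2).2⟩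
  obtain ⟨q, q', hqq', hqp, hq'p, hq2, hq'2⟩ : ∃ q q' : Fin r, q ≠ q' ∧ q ≠ p ∧ q' ≠ p ∧
      2 ≤ ((Finset.univ : Finset (Fin (11*r+1))).filter fun j => c (0,j) = q).card ∧
      2 ≤ ((Finset.univ : Finset (Fin (11*r+1))).filter fun j => c (0,j) = q').card := by
    by_cases h1 : t = p
    · exact ⟨t', t'', ht't'', fun h => htt' (h1.symm ▸ h).symm, fun h => htt'' (h1.symm ▸ h).symm,
        hct', hct''⟩
    by_cases h2 : t' = p
    · exact ⟨t, t'', htt'', h1, fun h => ht't'' (h2.symm ▸ h).symm, hct, hct''⟩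
    · exact ⟨t, t', htt', h1, h2, hct, hct'⟩
  obtain ⟨v1, v2, hv12, hv1, hv2⟩ := twocols q hq2
  obtain ⟨v1', v2', hv12', hv1', hv2'⟩ := twocols q' hq'2
  -- counting function on P
  set cnt : Fin (2*r+5) → Fin r → ℕ := fun i x => (P.filter fun u => c (i,u) = x).card with hcnt
  have hcntp : ∀ i : Fin (2*r+5), i ≠ 0 → cnt i p ≤ 1 := by
    intro i hi
    rw [hcnt]
    apply Finset.card_le_one.mpr
    intro u hu u' hu'
    rw [Finset.mem_filter] at hu hu'
    by_contra hne
    exact mono 0 i u u' p (Ne.symm hi) hne (hPcol u hu.1) hu.2 (hPcol u' hu'.1) hu'.2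
  -- values of a row on P, given a non-special value at a q-type column
  have rowA : ∀ (i : Fin (2*r+5)), i ≠ 0 → ∀ (s : Fin r) (v : Fin (11*r+1)),
      s ≠ p → c (0,v) = s → c (i,v) ≠ p → c (i,v) ≠ s →
      ∀ u ∈ P, c (i,u) = p ∨ c (i,u) = s ∨ c (i,u) = c (i,v) := by
    intro i hi s v hsp hv hbp hbs u hu
    by_contra h
    push_neg at h
    obtain ⟨h1, h2, h3⟩ := h
    have huv : u ≠ v := by
      intro e; rw [← e] at hv; rw [hPcol u hu] at hv; exact hsp hv.symm
    refine rain 0 i u v (Ne.symm hi) huv ?_ ?_ ?_ ?_ ?_ ?_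
    · rw [hPcol u hu]; exact fun e => h1 e.symm
    · rw [hPcol u hu, hv]; exact fun e => hsp e.symm
    · rw [hPcol u hu]; exact fun e => hbp e.symm
    · rw [hv]; exact h2
    · exact h3
    · rw [hv]; exact fun e => hbs e.symm
  -- the set of colors appearing ≥ 5 times on P in row i
  set S : Fin (2*r+5) → Finset (Fin r) := fun i => Finset.univ.filter fun x => 5 ≤ cnt i x
    with hSdef
  have hS5 : ∀ i x, x ∈ S i → 5 ≤ cnt i x := by
    intro i x hx
    rw [hSdef] at hx
    simpa using hx
  have hSmem : ∀ i x, 5 ≤ cnt i x → x ∈ S i := by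
    intro i x hx
    rw [hSdef]
    simpa using hx
  -- no color appears ≥ 5 times on P in 4 distinct rows
  have four : ∀ i1 i2 i3 i4 : Fin (2*r+5), i1 ≠ i2 → i1 ≠ i3 → i1 ≠ i4 → i2 ≠ i3 → i2 ≠ i4 →
      i3 ≠ i4 → ∀ x : Fin r, x ∈ S i1 → x ∈ S i2 → x ∈ S i3 → x ∈ S i4 → False := by
    intro i1 i2 i3 i4 d12 d13 d14 d23 d24 d34 x m1 m2 m3 m4
    have key : ∀ ia ib : Fin (2*r+5), ia ≠ ib →
        ((P.filter fun u => c (ia,u) = x) ∩ (P.filter fun u => c (ib,u) = x)).card ≤ 1 := by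
      intro ia ib hab
      apply Finset.card_le_one.mpr
      intro u hu u' hu'
      rw [Finset.mem_inter, Finset.mem_filter, Finset.mem_filter] at hu hu'
      by_contra hne
      exact mono ia ib u u' x hab hne hu.1.2 hu.2.2 hu'.1.2 hu'.2.2
    exact aux_four_sets P _ _ _ _ (Finset.filter_subset _ _) (Finset.filter_subset _ _)
      (Finset.filter_subset _ _) (Finset.filter_subset _ _)
      (hS5 _ _ m1) (hS5 _ _ m2) (hS5 _ _ m3) (hS5 _ _ m4)
      (key _ _ d12) (key _ _ d13) (key _ _ d14) (key _ _ d23) (key _ _ d24) (key _ _ d34) hPcard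
  -- structure of rows that are neither case B nor heavy
  have rowNA : ∀ i : Fin (2*r+5), i ≠ 0 →
      ¬((c (i,v1) = p ∨ c (i,v1) = q) ∧ (c (i,v2) = p ∨ c (i,v2) = q) ∧
        (c (i,v1') = p ∨ c (i,v1') = q') ∧ (c (i,v2') = p ∨ c (i,v2') = q')) →
      ¬(∃ x, 7 ≤ cnt i x) →
      ∃ s b : Fin r, s ≠ b ∧ s ≠ p ∧ b ≠ p ∧ S i = {s, b} ∧
        ∀ u ∈ P, c (i,u) = p ∨ c (i,u) ∈ S i := by
    intro i hi hB hH
    push_neg at hH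
    -- find the witness column
    obtain ⟨s, v, hsp, hv, hbp, hbs⟩ : ∃ (s : Fin r) (v : Fin (11*r+1)), s ≠ p ∧ c (0,v) = s ∧
        c (i,v) ≠ p ∧ c (i,v) ≠ s := by
      by_contra hc
      push_neg at hc
      refine hB ⟨?_, ?_, ?_, ?_⟩
      · by_cases e : c (i,v1) = p
        · exact Or.inl e
        · exact Or.inr (hc q v1 hqp hv1 e)
      · by_cases e : c (i,v2) = p
        · exact Or.inl e
        · exact Or.inr (hc q v2 hqp hv2 e)
      · by_cases e : c (i,v1') = p
        · exact Or.inl e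
        · exact Or.inr (hc q' v1' hq'p hv1' e)
      · by_cases e : c (i,v2') = p
        · exact Or.inl e
        · exact Or.inr (hc q' v2' hq'p hv2' e)
    have hall := rowA i hi s v hsp hv hbp hbs
    set b := c (i,v) with hb
    -- counting : cnt i s + cnt i b ≥ 11
    have hcover : P ⊆ ((P.filter fun u => c (i,u) = p) ∪ (P.filter fun u => c (i,u) = s)) ∪
        (P.filter fun u => c (i,u) = b) := by
      intro u hu
      rcases hall u hu with h | h | h
      · simp [Finset.mem_filter, hu, h]
      · simp [Finset.mem_filter, hu, h]
      · simp [Finset.mem_filter, hu, h]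
    have hc1 : (12 : ℕ) ≤ cnt i p + cnt i s + cnt i b := by
      have h1 := Finset.card_le_card hcover
      have h2 := Finset.card_union_le ((P.filter fun u => c (i,u) = p) ∪
        (P.filter fun u => c (i,u) = s)) (P.filter fun u => c (i,u) = b)
      have h3 := Finset.card_union_le (P.filter fun u => c (i,u) = p)
        (P.filter fun u => c (i,u) = s)
      rw [hPcard] at h1
      simp only [hcnt]
      omega
    have hps := hcntp i hi
    have h6s := hH s
    have h6b := hH b
    have h5s : 5 ≤ cnt i s := by omega
    have h5b : 5 ≤ cnt i b := by omega
    have hsb : s ≠ b := fun e => hbs e.symm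
    -- S i = {s, b}
    have hSi : S i = {s, b} := by
      apply Finset.ext
      intro x
      simp only [Finset.mem_insert, Finset.mem_singleton]
      constructor
      · intro hx
        have h5x := hS5 i x hx
        by_contra hxx
        push_neg at hxx
        have hxp : x ≠ p := by
          intro e; rw [e] at h5x; omega
        have : cnt i x = 0 := by
          simp only [hcnt]
          apply Finset.card_eq_zero.mpr
          apply Finset.filter_eq_empty_iff.mpr
          intro u hu he
          rcases hall u hu with h | h | h
          · exact hxp (by rw [← he, h])
          · exact hxx.1 (by rw [← he, h])
          · exact hxx.2 (by rw [← he, h])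
        omega
      · rintro (rfl | rfl)
        · exact hSmem i _ h5s
        · exact hSmem i _ h5b
    refine ⟨s, b, hsb, hsp, hbp, hSi, ?_⟩
    intro u hu
    rcases hall u hu with h | h | h
    · exact Or.inl h
    · exact Or.inr (by rw [h, hSi]; simp)
    · exact Or.inr (by rw [h, hSi]; simp)
  -- the 2-element color sets of two NA rows intersect
  have inter : ∀ i i' : Fin (2*r+5), i ≠ 0 → i' ≠ 0 → i ≠ i' →
      ∀ α β α' β' : Fin r, α ≠ β → α' ≠ β' → S i = {α, β} → S i' = {α', β'} →
      (∀ u ∈ P, c (i,u) = p ∨ c (i,u) ∈ S i) → (∀ u ∈ P, c (i',u) = p ∨ c (i',u) ∈ S i') →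
      (S i ∩ S i').Nonempty := by
    intro i i' hi hi' hii α β α' β' hab hab' hSi hSi' halli halli'
    by_contra hdis
    have hd : ∀ x : Fin r, x ∈ S i → x ∈ S i' → False := fun x h h' =>
      hdis ⟨x, Finset.mem_inter.mpr ⟨h, h'⟩⟩
    have mα : α ∈ S i := by rw [hSi]; simp
    have mβ : β ∈ S i := by rw [hSi]; simp
    have mα' : α' ∈ S i' := by rw [hSi']; simp
    have mβ' : β' ∈ S i' := by rw [hSi']; simp
    have dαα' : α ≠ α' := fun e => hd α mα (e ▸ mα')
    have dαβ' : α ≠ β' := fun e => hd α mα (e ▸ mβ')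
    have dβα' : β ≠ α' := fun e => hd β mβ (e ▸ mα')
    have dββ' : β ≠ β' := fun e => hd β mβ (e ▸ mβ')
    -- rainbow rules out simultaneous nonempty diagonal intersections
    have hrb : ∀ (x y x' y' : Fin r), x ≠ y → x' ≠ y' → x ≠ x' → x ≠ y' → y ≠ x' → y ≠ y' →
        ((P.filter fun u => c (i,u) = x) ∩ (P.filter fun u => c (i',u) = x')).Nonempty →
        ((P.filter fun u => c (i,u) = y) ∩ (P.filter fun u => c (i',u) = y')).Nonempty →
        False := by
      rintro x y x' y' hxy hxy' e1 e2 e3 e4 ⟨u, hu⟩ ⟨u', hu'⟩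
      rw [Finset.mem_inter, Finset.mem_filter, Finset.mem_filter] at hu hu'
      have huu : u ≠ u' := fun e => hxy (by rw [← hu.1.2, ← hu'.1.2, e])
      exact rain i i' u u' hii huu
        (by rw [hu.1.2, hu.2.2]; exact e1)
        (by rw [hu.1.2, hu'.1.2]; exact hxy)
        (by rw [hu.1.2, hu'.2.2]; exact e2)
        (by rw [hu.2.2, hu'.1.2]; exact Ne.symm e3)
        (by rw [hu.2.2, hu'.2.2]; exact hxy')
        (by rw [hu'.1.2, hu'.2.2]; exact e4)
    -- if a color class of one row lands in the p-class of the other, contradiction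
    have subp1 : ∀ x' : Fin r, x' ∈ S i' → (∀ u ∈ P, c (i',u) = x' → c (i,u) = p) → False := by
      intro x' hx' hsub
      have hsubset : (P.filter fun u => c (i',u) = x') ⊆ (P.filter fun u => c (i,u) = p) := by
        intro u hu
        rw [Finset.mem_filter] at hu ⊢
        exact ⟨hu.1, hsub u hu.1 hu.2⟩
      have h1 := Finset.card_le_card hsubset
      have h2 := hS5 i' x' hx'
      have h3 := hcntp i hi
      have e1 : cnt i' x' = (P.filter fun u => c (i',u) = x').card := rfl
      have e2 : cnt i p = (P.filter fun u => c (i,u) = p).card := rfl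
      omega
    have subp2 : ∀ x : Fin r, x ∈ S i → (∀ u ∈ P, c (i,u) = x → c (i',u) = p) → False := by
      intro x hx hsub
      have hsubset : (P.filter fun u => c (i,u) = x) ⊆ (P.filter fun u => c (i',u) = p) := by
        intro u hu
        rw [Finset.mem_filter] at hu ⊢
        exact ⟨hu.1, hsub u hu.1 hu.2⟩
      have h1 := Finset.card_le_card hsubset
      have h2 := hS5 i x hx
      have h3 := hcntp i' hi'
      have e1 : cnt i x = (P.filter fun u => c (i,u) = x).card := rfl
      have e2 : cnt i' p = (P.filter fun u => c (i',u) = p).card := rfl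
      omega
    -- case analysis on the four intersections
    by_cases n1 : ((P.filter fun u => c (i,u) = α) ∩ (P.filter fun u => c (i',u) = α')).Nonempty
    · have nββ' : ¬((P.filter fun u => c (i,u) = β) ∩
          (P.filter fun u => c (i',u) = β')).Nonempty :=
        fun h => hrb α β α' β' hab hab' dαα' dαβ' dβα' dββ' n1 h
      by_cases n2 : ((P.filter fun u => c (i,u) = β) ∩
          (P.filter fun u => c (i',u) = α')).Nonempty
      · have nαβ' : ¬((P.filter fun u => c (i,u) = α) ∩
            (P.filter fun u => c (i',u) = β')).Nonempty :=
          fun h => hrb α β β' α' hab (Ne.symm hab') dαβ' dαα' dββ' dβα' h n2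
        -- A'β' lands in p-class of i
        refine subp1 β' mβ' ?_
        intro u hu hcu
        rcases halli u hu with h | h
        · exact h
        · rw [hSi] at h
          simp only [Finset.mem_insert, Finset.mem_singleton] at h
          rcases h with h | h
          · exact absurd ⟨u, Finset.mem_inter.mpr ⟨Finset.mem_filter.mpr ⟨hu, h⟩,
              Finset.mem_filter.mpr ⟨hu, hcu⟩⟩⟩ nαβ'
          · exact absurd ⟨u, Finset.mem_inter.mpr ⟨Finset.mem_filter.mpr ⟨hu, h⟩,
              Finset.mem_filter.mpr ⟨hu, hcu⟩⟩⟩ nββ'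
      · -- Aβ lands in p-class of i'
        refine subp2 β mβ ?_
        intro u hu hcu
        rcases halli' u hu with h | h
        · exact h
        · rw [hSi'] at h
          simp only [Finset.mem_insert, Finset.mem_singleton] at h
          rcases h with h | h
          · exact absurd ⟨u, Finset.mem_inter.mpr ⟨Finset.mem_filter.mpr ⟨hu, hcu⟩,
              Finset.mem_filter.mpr ⟨hu, h⟩⟩⟩ n2
          · exact absurd ⟨u, Finset.mem_inter.mpr ⟨Finset.mem_filter.mpr ⟨hu, hcu⟩,
              Finset.mem_filter.mpr ⟨hu, h⟩⟩⟩ nββ'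
    · by_cases n2 : ((P.filter fun u => c (i,u) = α) ∩
          (P.filter fun u => c (i',u) = β')).Nonempty
      · have nβα' : ¬((P.filter fun u => c (i,u) = β) ∩
            (P.filter fun u => c (i',u) = α')).Nonempty :=
          fun h => hrb α β β' α' hab (Ne.symm hab') dαβ' dαα' dββ' dβα' n2 h
        -- A'α' lands in p-class of i
        refine subp1 α' mα' ?_
        intro u hu hcu
        rcases halli u hu with h | h
        · exact h
        · rw [hSi] at h
          simp only [Finset.mem_insert, Finset.mem_singleton] at h
          rcases h with h | h
          · exact absurd ⟨u, Finset.mem_inter.mpr ⟨Finset.mem_filter.mpr ⟨hu, h⟩,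
              Finset.mem_filter.mpr ⟨hu, hcu⟩⟩⟩ n1
          · exact absurd ⟨u, Finset.mem_inter.mpr ⟨Finset.mem_filter.mpr ⟨hu, h⟩,
              Finset.mem_filter.mpr ⟨hu, hcu⟩⟩⟩ nβα'
      · -- Aα lands in p-class of i'
        refine subp2 α mα ?_
        intro u hu hcu
        rcases halli' u hu with h | h
        · exact h
        · rw [hSi'] at h
          simp only [Finset.mem_insert, Finset.mem_singleton] at h
          rcases h with h | h
          · exact absurd ⟨u, Finset.mem_inter.mpr ⟨Finset.mem_filter.mpr ⟨hu, hcu⟩,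
              Finset.mem_filter.mpr ⟨hu, h⟩⟩⟩ n1
          · exact absurd ⟨u, Finset.mem_inter.mpr ⟨Finset.mem_filter.mpr ⟨hu, hcu⟩,
              Finset.mem_filter.mpr ⟨hu, h⟩⟩⟩ n2
  -- classification of rows ≠ 0
  set R : Finset (Fin (2*r+5)) := Finset.univ.erase 0 with hRdef
  set HH : Finset (Fin (2*r+5)) := R.filter (fun i => ∃ x, 7 ≤ cnt i x) with hHdef
  set BB : Finset (Fin (2*r+5)) := R.filter (fun i => (c (i,v1) = p ∨ c (i,v1) = q) ∧
    (c (i,v2) = p ∨ c (i,v2) = q) ∧ (c (i,v1') = p ∨ c (i,v1') = q') ∧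
    (c (i,v2') = p ∨ c (i,v2') = q')) with hBdef
  set NN : Finset (Fin (2*r+5)) := R.filter (fun i => ¬((c (i,v1) = p ∨ c (i,v1) = q) ∧
    (c (i,v2) = p ∨ c (i,v2) = q) ∧ (c (i,v1') = p ∨ c (i,v1') = q') ∧
    (c (i,v2') = p ∨ c (i,v2') = q')) ∧ ¬(∃ x, 7 ≤ cnt i x)) with hNdef
  have hcover : R ⊆ (HH ∪ BB) ∪ NN := by
    intro i hi
    simp only [hHdef, hNdef, hBdef, Finset.mem_union, Finset.mem_filter]
    by_cases h1 : (c (i,v1) = p ∨ c (i,v1) = q) ∧ (c (i,v2) = p ∨ c (i,v2) = q) ∧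
        (c (i,v1') = p ∨ c (i,v1') = q') ∧ (c (i,v2') = p ∨ c (i,v2') = q')
    · exact Or.inl (Or.inr ⟨hi, h1⟩)
    by_cases h2 : ∃ x, 7 ≤ cnt i x
    · exact Or.inl (Or.inl ⟨hi, h2⟩)
    · exact Or.inr ⟨hi, h1, h2⟩
  -- bound on case-B rows
  have hBcard : BB.card ≤ 4 := by
    have h4 : (Finset.univ : Finset (Bool × Bool)).card = 4 := by
      simp [Finset.card_univ]
    rw [← h4]
    apply Finset.card_le_card_of_injOn
      (fun i => ((decide (c (i,v1) = p), decide (c (i,v1') = p)) : Bool × Bool))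
      (fun i _ => Finset.mem_univ _)
    intro i hi i' hi' he
    simp only [Finset.mem_coe] at hi hi'
    by_contra hne
    simp only [hBdef, Finset.mem_filter, hRdef, Finset.mem_erase] at hi hi'
    obtain ⟨⟨hi0, -⟩, hB1, hB2, hB1', hB2'⟩ := hi
    obtain ⟨⟨hi0', -⟩, hC1, hC2, hC1', hC2'⟩ := hi'
    have he1 : (c (i,v1) = p) ↔ (c (i',v1) = p) := by
      have := congrArg Prod.fst he
      simpa using decide_eq_decide.mp this
    have he2 : (c (i,v1') = p) ↔ (c (i',v1') = p) := by
      have := congrArg Prod.snd he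
      simpa using decide_eq_decide.mp this
    have key1 : ∃ w, c (0,w) = q ∧ c (i,w) = p ∧ c (i',w) = p := by
      by_cases hw : c (i,v1) = p
      · exact ⟨v1, hv1, hw, he1.mp hw⟩
      · have hiq : c (i,v1) = q := hB1.resolve_left hw
        have hi'q : c (i',v1) = q := hC1.resolve_left (fun h => hw (he1.mpr h))
        refine ⟨v2, hv2, ?_, ?_⟩
        · rcases hB2 with h | h
          · exact h
          · exact (mono 0 i v1 v2 q (Ne.symm hi0) hv12 hv1 hiq hv2 h).elim
        · rcases hC2 with h | h
          · exact h
          · exact (mono 0 i' v1 v2 q (Ne.symm hi0') hv12 hv1 hi'q hv2 h).elim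
    have key2 : ∃ w, c (0,w) = q' ∧ c (i,w) = p ∧ c (i',w) = p := by
      by_cases hw : c (i,v1') = p
      · exact ⟨v1', hv1', hw, he2.mp hw⟩
      · have hiq : c (i,v1') = q' := hB1'.resolve_left hw
        have hi'q : c (i',v1') = q' := hC1'.resolve_left (fun h => hw (he2.mpr h))
        refine ⟨v2', hv2', ?_, ?_⟩
        · rcases hB2' with h | h
          · exact h
          · exact (mono 0 i v1' v2' q' (Ne.symm hi0) hv12' hv1' hiq hv2' h).elim
        · rcases hC2' with h | h
          · exact h
          · exact (mono 0 i' v1' v2' q' (Ne.symm hi0') hv12' hv1' hi'q hv2' h).elim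
    obtain ⟨w, hw0, hwi, hwi'⟩ := key1
    obtain ⟨w', hw0', hwi2, hwi2'⟩ := key2
    have hww : w ≠ w' := by
      intro e
      rw [e] at hw0
      rw [hw0] at hw0'
      exact hqq' hw0'
    exact mono i i' w w' p hne hww hwi hwi' hwi2 hwi2'
  -- bound on heavy rows
  have hHcard : HH.card ≤ (Finset.univ.erase p).card := by
    apply Finset.card_le_card_of_injOn (fun i => if h : ∃ x, 7 ≤ cnt i x then h.choose else p)
    · intro i hi
      simp only [Finset.mem_coe, hHdef, Finset.mem_filter, hRdef, Finset.mem_erase] at hi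
      obtain ⟨⟨hi0, -⟩, hx⟩ := hi
      simp only [Finset.mem_coe]
      rw [dif_pos hx]
      refine Finset.mem_erase.mpr ⟨?_, Finset.mem_univ _⟩
      intro e
      have h1 := hx.choose_spec
      rw [e] at h1
      have h2 := hcntp i hi0
      omega
    · intro i hi i' hi' he
      simp only [Finset.mem_coe] at hi hi'
      by_contra hne
      simp only [hHdef, Finset.mem_filter, hRdef, Finset.mem_erase] at hi hi'
      obtain ⟨⟨hi0, -⟩, hx⟩ := hi
      obtain ⟨⟨hi0', -⟩, hx'⟩ := hi'
      replace he : (if h : ∃ x, 7 ≤ cnt i x then h.choose else p) =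
          (if h : ∃ x, 7 ≤ cnt i' x then h.choose else p) := he
      rw [dif_pos hx, dif_pos hx'] at he
      have h7 : 7 ≤ cnt i hx.choose := hx.choose_spec
      have h7' : 7 ≤ cnt i' hx.choose := by rw [he]; exact hx'.choose_spec
      have hsub : (P.filter fun u => c (i,u) = hx.choose) ∪
          (P.filter fun u => c (i',u) = hx.choose) ⊆ P := by
        intro u hu
        rcases Finset.mem_union.mp hu with h | h
        · exact (Finset.mem_filter.mp h).1
        · exact (Finset.mem_filter.mp h).1
      have hcu := Finset.card_le_card hsub
      rw [hPcard] at hcu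
      have hui := Finset.card_union_add_card_inter (P.filter fun u => c (i,u) = hx.choose)
        (P.filter fun u => c (i',u) = hx.choose)
      have e1 : cnt i hx.choose = (P.filter fun u => c (i,u) = hx.choose).card := rfl
      have e2 : cnt i' hx.choose = (P.filter fun u => c (i',u) = hx.choose).card := rfl
      obtain ⟨u, hu, u', hu', hne2⟩ := Finset.one_lt_card.mp (show 1 < ((P.filter fun u =>
        c (i,u) = hx.choose) ∩ (P.filter fun u => c (i',u) = hx.choose)).card by omega)
      rw [Finset.mem_inter, Finset.mem_filter, Finset.mem_filter] at hu hu'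
      exact mono i i' u u' hx.choose hne hne2 hu.1.2 hu.2.2 hu'.1.2 hu'.2.2
  have hHval : (Finset.univ.erase p).card = r - 1 := by
    rw [Finset.card_erase_of_mem (Finset.mem_univ _)]
    simp [Finset.card_univ]
  have hNcard : NN.card ≤ 4 := by
    by_contra hN
    push_neg at hN
    have hNmem : ∀ i ∈ NN, i ≠ 0 := by
      intro i hi
      simp only [hNdef, Finset.mem_filter, hRdef, Finset.mem_erase] at hi
      exact hi.1.1
    have spec : ∀ i ∈ NN, ∃ s b : Fin r, s ≠ b ∧ S i = {s, b} ∧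
        ∀ u ∈ P, c (i,u) = p ∨ c (i,u) ∈ S i := by
      intro i hi
      have hi0 := hNmem i hi
      simp only [hNdef, Finset.mem_filter, hRdef, Finset.mem_erase] at hi
      obtain ⟨s, b, h1, -, -, h4, h5⟩ := rowNA i hi0 hi.2.1 hi.2.2
      exact ⟨s, b, h1, h4, h5⟩
    have inter' : ∀ i ∈ NN, ∀ i' ∈ NN, i ≠ i' → (S i ∩ S i').Nonempty := by
      intro i hi i' hi' hne
      obtain ⟨a, b, hab, hS, hall⟩ := spec i hi
      obtain ⟨a', b', hab', hS', hall'⟩ := spec i' hi'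
      exact inter i i' (hNmem i hi) (hNmem i' hi') hne a b a' b' hab hab' hS hS' hall hall'
    have cardS : ∀ i ∈ NN, (S i).card = 2 := by
      intro i hi
      obtain ⟨a, b, hab, hS, -⟩ := spec i hi
      rw [hS, Finset.card_insert_of_notMem (by simp [hab]), Finset.card_singleton]
    have chase_rows : ∀ j1 j2 j3 j4 j5 : Fin (2*r+5),
        j1 ∈ NN → j2 ∈ NN → j3 ∈ NN → j4 ∈ NN → j5 ∈ NN →
        j1 ≠ j2 → j1 ≠ j3 → j1 ≠ j4 → j1 ≠ j5 → j2 ≠ j3 → j2 ≠ j4 → j2 ≠ j5 →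
        j3 ≠ j4 → j3 ≠ j5 → j4 ≠ j5 →
        ∀ a b : Fin r, a ≠ b → S j1 = {a, b} → a ∈ S j2 → a ∈ S j3 → b ∈ S j4 → b ∈ S j5 →
        False := by
      intro j1 j2 j3 j4 j5 m1 m2 m3 m4 m5 d12 d13 d14 d15 d23 d24 d25 d34 d35 d45
        a b hab hS1 ha2 ha3 hb4 hb5
      exact aux_chase a b (S j1) (S j2) (S j3) (S j4) (S j5) hab
        (by rw [hS1]; simp) (by rw [hS1]; simp) ha2 ha3 hb4 hb5
        (cardS j2 m2) (cardS j3 m3) (cardS j4 m4) (cardS j5 m5)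
        (inter' j2 m2 j4 m4 d24) (inter' j2 m2 j5 m5 d25)
        (inter' j3 m3 j4 m4 d34) (inter' j3 m3 j5 m5 d35)
        (fun x hx => four j1 j2 j3 j4 d12 d13 d14 d23 d24 d34 x hx.1 hx.2.1 hx.2.2.1 hx.2.2.2)
        (fun x hx => four j1 j2 j3 j5 d12 d13 d15 d23 d25 d35 x hx.1 hx.2.1 hx.2.2.1 hx.2.2.2)
        (fun x hx => four j1 j4 j5 j2 d14 d15 d12 d45 (Ne.symm d24) (Ne.symm d25) x
          hx.1 hx.2.1 hx.2.2.1 hx.2.2.2)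
        (fun x hx => four j1 j4 j5 j3 d14 d15 d13 d45 (Ne.symm d34) (Ne.symm d35) x
          hx.1 hx.2.1 hx.2.2.1 hx.2.2.2)
        (fun x hx => four j2 j3 j4 j5 d23 d24 d25 d34 d35 d45 x hx.1 hx.2.1 hx.2.2.1 hx.2.2.2)
    obtain ⟨i1, hm1⟩ : NN.Nonempty := Finset.card_pos.mp (by omega)
    have hc1 : 4 ≤ (NN.erase i1).card := by rw [Finset.card_erase_of_mem hm1]; omega
    obtain ⟨i2, hm2x⟩ : (NN.erase i1).Nonempty := Finset.card_pos.mp (by omega)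
    obtain ⟨d21, hm2⟩ := Finset.mem_erase.mp hm2x
    have hc2 : 3 ≤ ((NN.erase i1).erase i2).card := by rw [Finset.card_erase_of_mem hm2x]; omega
    obtain ⟨i3, hm3x⟩ : ((NN.erase i1).erase i2).Nonempty := Finset.card_pos.mp (by omega)
    obtain ⟨d32, hm3y⟩ := Finset.mem_erase.mp hm3x
    obtain ⟨d31, hm3⟩ := Finset.mem_erase.mp hm3y
    have hc3 : 2 ≤ (((NN.erase i1).erase i2).erase i3).card := by
      rw [Finset.card_erase_of_mem hm3x]; omega
    obtain ⟨i4, hm4x⟩ : (((NN.erase i1).erase i2).erase i3).Nonempty :=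
      Finset.card_pos.mp (by omega)
    obtain ⟨d43, hm4y⟩ := Finset.mem_erase.mp hm4x
    obtain ⟨d42, hm4z⟩ := Finset.mem_erase.mp hm4y
    obtain ⟨d41, hm4⟩ := Finset.mem_erase.mp hm4z
    have hc4 : 1 ≤ ((((NN.erase i1).erase i2).erase i3).erase i4).card := by
      rw [Finset.card_erase_of_mem hm4x]; omega
    obtain ⟨i5, hm5x⟩ : ((((NN.erase i1).erase i2).erase i3).erase i4).Nonempty :=
      Finset.card_pos.mp (by omega)
    obtain ⟨d54, hm5y⟩ := Finset.mem_erase.mp hm5x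
    obtain ⟨d53, hm5z⟩ := Finset.mem_erase.mp hm5y
    obtain ⟨d52, hm5w⟩ := Finset.mem_erase.mp hm5z
    obtain ⟨d51, hm5⟩ := Finset.mem_erase.mp hm5w
    have d12 := Ne.symm d21
    have d13 := Ne.symm d31
    have d14 := Ne.symm d41
    have d15 := Ne.symm d51
    have d23 := Ne.symm d32
    have d24 := Ne.symm d42
    have d25 := Ne.symm d52
    have d34 := Ne.symm d43
    have d35 := Ne.symm d53
    have d45 := Ne.symm d54
    obtain ⟨a, b, hab, hS1, -⟩ := spec i1 hm1
    have haS1 : a ∈ S i1 := by rw [hS1]; simp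
    have hbS1 : b ∈ S i1 := by rw [hS1]; simp
    have choice : ∀ j ∈ NN, i1 ≠ j → a ∈ S j ∨ b ∈ S j := by
      intro j hj hne
      obtain ⟨x, hx⟩ := inter' i1 hm1 j hj hne
      rw [Finset.mem_inter] at hx
      have h1 := hx.1
      rw [hS1] at h1
      simp only [Finset.mem_insert, Finset.mem_singleton] at h1
      rcases h1 with rfl | rfl
      · exact Or.inl hx.2
      · exact Or.inr hx.2
    rcases choice i2 hm2 d12 with h2 | h2 <;>
      rcases choice i3 hm3 d13 with h3 | h3 <;>
        rcases choice i4 hm4 d14 with h4 | h4 <;>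
          rcases choice i5 hm5 d15 with h5 | h5
    · exact four i1 i2 i3 i4 d12 d13 d14 d23 d24 d34 a haS1 h2 h3 h4
    · exact four i1 i2 i3 i4 d12 d13 d14 d23 d24 d34 a haS1 h2 h3 h4
    · exact four i1 i2 i3 i5 d12 d13 d15 d23 d25 d35 a haS1 h2 h3 h5
    · exact chase_rows i1 i2 i3 i4 i5 hm1 hm2 hm3 hm4 hm5 d12 d13 d14 d15 d23 d24 d25 d34 d35
        d45 a b hab hS1 h2 h3 h4 h5
    · exact four i1 i2 i4 i5 d12 d14 d15 d24 d25 d45 a haS1 h2 h4 h5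
    · exact chase_rows i1 i2 i4 i3 i5 hm1 hm2 hm4 hm3 hm5 d12 d14 d13 d15 d24 d23 d25
        (Ne.symm d34) d45 d35 a b hab hS1 h2 h4 h3 h5
    · exact chase_rows i1 i2 i5 i3 i4 hm1 hm2 hm5 hm3 hm4 d12 d15 d13 d14 d25 d23 d24
        (Ne.symm d35) (Ne.symm d45) d34 a b hab hS1 h2 h5 h3 h4
    · exact four i1 i3 i4 i5 d13 d14 d15 d34 d35 d45 b hbS1 h3 h4 h5
    · exact four i1 i3 i4 i5 d13 d14 d15 d34 d35 d45 a haS1 h3 h4 h5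
    · exact chase_rows i1 i3 i4 i2 i5 hm1 hm3 hm4 hm2 hm5 d13 d14 d12 d15 d34 (Ne.symm d23)
        d35 (Ne.symm d24) d45 d25 a b hab hS1 h3 h4 h2 h5
    · exact chase_rows i1 i3 i5 i2 i4 hm1 hm3 hm5 hm2 hm4 d13 d15 d12 d14 d35 (Ne.symm d23)
        d34 (Ne.symm d25) (Ne.symm d45) d24 a b hab hS1 h3 h5 h2 h4
    · exact four i1 i2 i4 i5 d12 d14 d15 d24 d25 d45 b hbS1 h2 h4 h5
    · exact chase_rows i1 i4 i5 i2 i3 hm1 hm4 hm5 hm2 hm3 d14 d15 d12 d13 d45 (Ne.symm d24)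
        (Ne.symm d34) (Ne.symm d25) (Ne.symm d35) d23 a b hab hS1 h4 h5 h2 h3
    · exact four i1 i2 i3 i5 d12 d13 d15 d23 d25 d35 b hbS1 h2 h3 h5
    · exact four i1 i2 i3 i4 d12 d13 d14 d23 d24 d34 b hbS1 h2 h3 h4
    · exact four i1 i2 i3 i4 d12 d13 d14 d23 d24 d34 b hbS1 h2 h3 h4
  have h1 := Finset.card_le_card hcover
  have h2 := Finset.card_union_le (HH ∪ BB) NN
  have h3 := Finset.card_union_le HH BB
  have hRcard : R.card = 2*r+4 := by
    rw [hRdef, Finset.card_erase_of_mem (Finset.mem_univ _)]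
    simp [Finset.card_univ]
  omega
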